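/- arXiv:1810.11232 — 3 statements merged into one kernel-verified Lean document; each statement's English description precedes it below -/
import Mathlib

section
/- Let X be the sum of n independent exponentially distributed random variables with rates c, 2c, ..., nc (i.e., X ~ ∑_{i=1}^n Exp(ci)) for c > 0. Then for any a ≥ 0, P(X ≤ a) = (1 - e^{-ca})^n. -/
open MeasureTheory ProbabilityTheory Real

lemma exp_calc (c : ℝ) (hc : 0 < c) (n : ℕ) (a : ℝ) (ha : 0 ≤ a) :
    ∫ w in (0:ℝ)..a, (c * (n + 1)) * rexp (-(c * (n + 1) * w)) * (1 - rexp (-(c * (a - w)))) ^ n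
      = (1 - rexp (-(c * a))) ^ (n + 1) := by
  set q : ℝ := rexp (-(c * a)) with hq
  set g : ℝ → ℝ := fun w => -((1 - q * rexp (c * w)) ^ (n + 1) * rexp (-(c * (n + 1) * w))) with hg
  have hderiv : ∀ w ∈ Set.uIcc (0:ℝ) a, HasDerivAt g
      ((c * (n + 1)) * rexp (-(c * (n + 1) * w)) * (1 - rexp (-(c * (a - w)))) ^ n) w := by
    intro w _
    have h1 : HasDerivAt (fun w : ℝ => rexp (c * w)) (c * rexp (c * w)) w := by
      simpa [mul_comm] using ((hasDerivAt_id w).const_mul c).exp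
    have h2 : HasDerivAt (fun w : ℝ => 1 - q * rexp (c * w)) (-(q * (c * rexp (c * w)))) w :=
      (h1.const_mul q).const_sub 1
    have h3 : HasDerivAt (fun w : ℝ => (1 - q * rexp (c * w)) ^ (n + 1))
        ((n + 1) * (1 - q * rexp (c * w)) ^ n * (-(q * (c * rexp (c * w))))) w := by
      simpa using h2.fun_pow (n + 1)
    have h4 : HasDerivAt (fun w : ℝ => rexp (-(c * (n + 1) * w)))
        ((-(c * (n + 1))) * rexp (-(c * (n + 1) * w))) w := by
      simpa [mul_comm, neg_mul] using ((hasDerivAt_id w).const_mul (-(c * ((n:ℝ) + 1)))).exp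
    have h5 := ((h3.fun_mul h4).fun_neg)
    refine h5.congr_deriv ?_
    have hE : rexp (-(c * (a - w))) = q * rexp (c * w) := by
      rw [hq, ← Real.exp_add]; ring_nf
    rw [hE]
    ring
  have hcont : IntervalIntegrable
      (fun w => (c * (n + 1)) * rexp (-(c * (n + 1) * w)) * (1 - rexp (-(c * (a - w)))) ^ n)
      MeasureTheory.volume 0 a := by
    apply Continuous.intervalIntegrable
    fun_prop
  rw [intervalIntegral.integral_eq_sub_of_hasDerivAt hderiv hcont]
  have h0 : (1:ℝ) - q * rexp (c * a) = 0 := by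
    rw [hq, ← Real.exp_add]; simp
  simp [hg, h0, Real.exp_zero]

lemma lint_calc (c : ℝ) (hc : 0 < c) (n : ℕ) (a : ℝ) (ha : 0 ≤ a) :
    ∫⁻ w, exponentialPDF (c * (n + 1)) w *
      (if 0 ≤ a - w then ENNReal.ofReal ((1 - rexp (-(c * (a - w)))) ^ n) else 0)
      = ENNReal.ofReal ((1 - rexp (-(c * a))) ^ (n + 1)) := by
  have hL : (0:ℝ) < c * (n + 1) := by positivity
  set f : ℝ → ℝ := fun w => (c * (n + 1)) * rexp (-(c * (n + 1) * w)) * (1 - rexp (-(c * (a - w)))) ^ n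
    with hf
  have hcont : Continuous f := by fun_prop
  have hind : ∀ w, exponentialPDF (c * (n + 1)) w *
      (if 0 ≤ a - w then ENNReal.ofReal ((1 - rexp (-(c * (a - w)))) ^ n) else 0)
      = Set.indicator (Set.Icc 0 a) (fun w => ENNReal.ofReal (f w)) w := by
    intro w
    rcases lt_or_ge w 0 with hw | hw
    · rw [exponentialPDF_of_neg hw, zero_mul, Set.indicator_of_notMem (by simp [hw.not_ge])]
    rcases le_or_gt w a with hwa | hwa
    · rw [exponentialPDF_of_nonneg hw, if_pos (by linarith),
        Set.indicator_of_mem (Set.mem_Icc.2 ⟨hw, hwa⟩), hf, ← ENNReal.ofReal_mul (by positivity)]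
    · rw [if_neg (by linarith), mul_zero, Set.indicator_of_notMem (by simp [hwa.not_ge])]
  rw [lintegral_congr hind, lintegral_indicator measurableSet_Icc,
    ← MeasureTheory.ofReal_integral_eq_lintegral_ofReal (hcont.integrableOn_Icc)]
  · rw [MeasureTheory.integral_Icc_eq_integral_Ioc, ← intervalIntegral.integral_of_le ha,
      exp_calc c hc n a ha]
  · filter_upwards [MeasureTheory.self_mem_ae_restrict measurableSet_Icc] with w hw
    have h1 : rexp (-(c * (a - w))) ≤ 1 := by
      apply Real.exp_le_one_iff.2; nlinarith [hw.2, hw.1, hc]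
    exact mul_nonneg (by positivity) (pow_nonneg (by linarith) n)

lemma indep_castSucc {Ω : Type*} [MeasurableSpace Ω] {μ : Measure Ω} {n : ℕ}
    {X : Fin (n + 1) → Ω → ℝ}
    (h : iIndepFun X μ) :
    iIndepFun (fun i : Fin n => X i.castSucc) μ := by
  classical
  rw [iIndepFun_iff_measure_inter_preimage_eq_mul] at h ⊢
  intro S sets hsets
  set sets' : Fin (n + 1) → Set ℝ := fun j =>
    if hj : (j : ℕ) < n then sets ⟨j, hj⟩ else Set.univ with hsets'
  have key := h (S.image Fin.castSucc) (sets := sets') ?_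
  · have h1 : ∀ i : Fin n, sets' i.castSucc = sets i := by
      intro i
      simp only [hsets', Fin.coe_castSucc, i.isLt, dif_pos]
    rw [Finset.set_biInter_finset_image, Finset.prod_image
      (fun x _ y _ hxy => Fin.castSucc_injective n hxy)] at key
    simpa only [h1] using key
  · intro j hj
    simp only [Finset.mem_image] at hj
    obtain ⟨i, hi, rfl⟩ := hj
    simp only [hsets', Fin.coe_castSucc, i.isLt, dif_pos]
    exact hsets ⟨(i.castSucc : ℕ), i.isLt⟩ hi

lemma sum_exp_cdf {Ω : Type*} [MeasurableSpace Ω] (μ : Measure Ω) [IsProbabilityMeasure μ]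
    (c : ℝ) (hc : 0 < c) :
    ∀ (n : ℕ) (X : Fin n → Ω → ℝ), (∀ i, Measurable (X i)) →
      iIndepFun X μ →
      (∀ i : Fin n, μ.map (X i) = expMeasure (c * ((i : ℕ) + 1))) →
      ∀ a : ℝ, μ {ω | ∑ i, X i ω ≤ a}
        = if 0 ≤ a then ENNReal.ofReal ((1 - rexp (-(c * a))) ^ n) else 0 := by
  intro n
  induction n with
  | zero =>
    intro X hmeas hindep hdist a
    by_cases ha : 0 ≤ a
    · rw [if_pos ha]
      have h1 : {ω : Ω | ∑ i : Fin 0, X i ω ≤ a} = Set.univ := by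
        ext ω; simp [ha]
      rw [h1]; simp
    · rw [if_neg ha]
      have h1 : {ω : Ω | ∑ i : Fin 0, X i ω ≤ a} = ∅ := by
        ext ω; simpa using ha
      rw [h1]; simp
  | succ n IH =>
    intro X hmeas hindep hdist a
    set V : Ω → ℝ := fun ω => ∑ i : Fin n, X i.castSucc ω with hV
    set W : Ω → ℝ := X (Fin.last n) with hW
    have hVmeas : Measurable V :=
      Finset.measurable_sum _ (fun i _ => hmeas i.castSucc)
    have hWmeas : Measurable W := hmeas _
    have hsum : {ω | ∑ i, X i ω ≤ a} = {ω | V ω + W ω ≤ a} := by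
      ext ω
      simp only [Set.mem_setOf_eq, Fin.sum_univ_castSucc]
      exact Iff.rfl
    rw [hsum]
    -- nonnegativity of each X i
    have hX0 : ∀ i : Fin (n + 1), μ {ω | X i ω < 0} = 0 := by
      intro i
      have h1 : μ {ω | X i ω < 0} = μ.map (X i) (Set.Iio 0) := by
        rw [Measure.map_apply (hmeas i) measurableSet_Iio]; rfl
      rw [h1, hdist i]
      show (gammaMeasure 1 _) _ = 0
      rw [gammaMeasure, withDensity_apply _ measurableSet_Iio]
      exact lintegral_gammaPDF_of_nonpos le_rfl
    by_cases ha : 0 ≤ a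
    case neg =>
      rw [if_neg ha]
      refine measure_mono_null ?_ (measure_iUnion_null fun i => hX0 i)
      intro ω hω
      by_contra hcon
      simp only [Set.mem_iUnion, Set.mem_setOf_eq, not_exists, not_lt] at hcon
      have h2 : 0 ≤ V ω + W ω := by
        rw [hV, hW, ← Fin.sum_univ_castSucc (f := fun i => X i ω)]
        exact Finset.sum_nonneg fun i _ => hcon i
      exact ha (le_trans h2 hω)
    rw [if_pos ha]
    -- independence of V and W
    have h1 : IndepFun (∑ j ∈ Finset.image Fin.castSucc Finset.univ, X j) (X (Fin.last n)) μ := by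
      refine hindep.indepFun_finsetSum_of_notMem hmeas ?_
      simp only [Finset.mem_image, Finset.mem_univ, true_and, not_exists]
      exact fun i => (Fin.castSucc_lt_last i).ne
    have hVs : (∑ j ∈ Finset.image Fin.castSucc Finset.univ, X j) = V := by
      funext ω
      rw [Finset.sum_apply, Finset.sum_image
        (fun x _ y _ hxy => Fin.castSucc_injective n hxy)]
    have hWV : IndepFun W V μ := (hVs ▸ h1).symm
    haveI : IsProbabilityMeasure (μ.map V) := Measure.isProbabilityMeasure_map hVmeas.aemeasurable
    haveI : IsProbabilityMeasure (μ.map W) := Measure.isProbabilityMeasure_map hWmeas.aemeasurable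
    have hmap : μ.map (fun ω => (W ω, V ω)) = (μ.map W).prod (μ.map V) :=
      (indepFun_iff_map_prod_eq_prod_map_map hWmeas.aemeasurable hVmeas.aemeasurable).1 hWV
    have hms : MeasurableSet {p : ℝ × ℝ | p.2 + p.1 ≤ a} :=
      measurableSet_le (measurable_snd.add measurable_fst) measurable_const
    have hstep : μ {ω | V ω + W ω ≤ a}
        = ∫⁻ w, (μ.map V) {v | v + w ≤ a} ∂(μ.map W) := by
      have h2 : μ {ω | V ω + W ω ≤ a}
          = μ.map (fun ω => (W ω, V ω)) {p : ℝ × ℝ | p.2 + p.1 ≤ a} := by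
        rw [Measure.map_apply (hWmeas.prodMk hVmeas) hms]; rfl
      rw [h2, hmap, Measure.prod_apply hms]; rfl
    rw [hstep]
    -- compute inner measure via IH
    have hinner : ∀ w : ℝ, (μ.map V) {v | v + w ≤ a}
        = if 0 ≤ a - w then ENNReal.ofReal ((1 - rexp (-(c * (a - w)))) ^ n) else 0 := by
      intro w
      have h3 : {v : ℝ | v + w ≤ a} = Set.Iic (a - w) := by
        ext v; simp [le_sub_iff_add_le]
      rw [h3, Measure.map_apply hVmeas measurableSet_Iic]
      have h4 : V ⁻¹' Set.Iic (a - w) = {ω | ∑ i : Fin n, X i.castSucc ω ≤ a - w} := rfl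
      rw [h4]
      exact IH (fun i => X i.castSucc) (fun i => hmeas i.castSucc) (indep_castSucc hindep)
        (fun i => by simpa using hdist i.castSucc) (a - w)
    rw [lintegral_congr hinner]
    -- identify μ.map W
    have h5 : μ.map W = expMeasure (c * (n + 1)) := by
      rw [hW, hdist (Fin.last n)]
      norm_num [Fin.val_last]
    rw [h5]
    have hgmeas : Measurable (exponentialPDF (c * (n + 1))) :=
      (measurable_exponentialPDFReal _).ennreal_ofReal
    have hFmeas : Measurable (fun w : ℝ =>
        if 0 ≤ a - w then ENNReal.ofReal ((1 - rexp (-(c * (a - w)))) ^ n) else 0) := by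
      refine Measurable.ite ?_ ?_ measurable_const
      · exact measurableSet_le measurable_const (measurable_const.sub measurable_id)
      · fun_prop
    have h6 : expMeasure (c * (n + 1)) = volume.withDensity (exponentialPDF (c * (n + 1))) := rfl
    rw [h6, lintegral_withDensity_eq_lintegral_mul _ hgmeas hFmeas]
    exact lint_calc c hc n a ha

theorem stmt_1 {Ω : Type*} [MeasurableSpace Ω] (μ : Measure Ω) [IsProbabilityMeasure μ]
    (n : ℕ) (c : ℝ) (hc : 0 < c) (X : Fin n → Ω → ℝ)
    (hmeas : ∀ i, Measurable (X i))
    (hindep : iIndepFun X μ)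
    (hdist : ∀ i : Fin n, μ.map (X i) = expMeasure (c * ((i : ℕ) + 1)))
    (a : ℝ) (ha : 0 ≤ a) :
    μ {ω | ∑ i, X i ω ≤ a} = ENNReal.ofReal ((1 - Real.exp (-(c * a))) ^ n) := by
  rw [sum_exp_cdf μ c hc n X hmeas hindep hdist a, if_pos ha]
end

section
/- Let X = ∑_{i=1}^n X_i with X_i ~ Exp(a_i) independent. Let μ = E[X] = ∑_{i=1}^n 1/a_i and a_* = min_i a_i. Then for any 0 < λ ≤ 1, P(X ≤ λμ) ≤ exp(-a_* μ (λ - 1 - ln λ)). -/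
open MeasureTheory ProbabilityTheory Real Set
open scoped NNReal ENNReal

lemma my_key_fun_eq (r t : ℝ) (hr : 0 < r) :
    (fun x => Real.toNNReal (gammaPDFReal 1 r x) • rexp (t * x))
      = Set.indicator (Ici 0) (fun x => r * rexp (-((r - t) * x))) := by
  funext x
  rw [NNReal.smul_def, Real.coe_toNNReal _ (gammaPDFReal_nonneg zero_lt_one hr x),
    gammaPDFReal]
  simp only [rpow_one, Real.Gamma_one, div_one, sub_self, rpow_zero, mul_one, smul_eq_mul]
  by_cases hx : 0 ≤ x
  · rw [if_pos hx, Set.indicator_of_mem (mem_Ici.mpr hx)]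
    rw [mul_assoc, ← Real.exp_add]
    ring_nf
  · rw [if_neg hx, Set.indicator_of_notMem (fun h => hx (mem_Ici.mp h)), zero_mul]

lemma my_expMeasure_eq (r : ℝ) :
    expMeasure r
      = volume.withDensity fun x => ((Real.toNNReal (gammaPDFReal 1 r x) : ℝ≥0) : ℝ≥0∞) := rfl

lemma my_integrable_exp_expMeasure {r t : ℝ} (hr : 0 < r) (ht : t < r) :
    Integrable (fun x => rexp (t * x)) (expMeasure r) := by
  have hb : 0 < r - t := sub_pos.2 ht
  rw [my_expMeasure_eq,
    integrable_withDensity_iff_integrable_smul ((measurable_gammaPDFReal 1 r).real_toNNReal)]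
  rw [my_key_fun_eq r t hr, integrable_indicator_iff measurableSet_Ici]
  rw [integrableOn_Ici_iff_integrableOn_Ioi]
  have := (exp_neg_integrableOn_Ioi 0 hb).const_mul r
  simp only [neg_mul] at this
  exact this

lemma my_integral_exp_expMeasure {r t : ℝ} (hr : 0 < r) (ht : t < r) :
    ∫ x, rexp (t * x) ∂(expMeasure r) = r / (r - t) := by
  have hb : 0 < r - t := sub_pos.2 ht
  rw [my_expMeasure_eq,
    integral_withDensity_eq_integral_smul ((measurable_gammaPDFReal 1 r).real_toNNReal)]
  have h1 : ∀ x : ℝ, Real.toNNReal (gammaPDFReal 1 r x) • rexp (t * x)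
      = Set.indicator (Ici 0) (fun x => r * rexp (-((r - t) * x))) x :=
    fun x => congrFun (my_key_fun_eq r t hr) x
  simp only [h1]
  rw [MeasureTheory.integral_indicator measurableSet_Ici,
    MeasureTheory.integral_Ici_eq_integral_Ioi,
    MeasureTheory.integral_const_mul]
  have h2 := integral_comp_mul_left_Ioi (fun x => rexp (-x)) 0 hb
  simp only [mul_zero, integral_exp_neg_Ioi_zero, smul_eq_mul, mul_one] at h2
  rw [h2, div_eq_mul_inv]

lemma my_log_concave {x c : ℝ} (hx : 0 ≤ x) (hxc : x ≤ c) (hc : 0 < c) :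
    (x / c) * Real.log (1 + c) ≤ Real.log (1 + x) := by
  have hd : x / c ≤ 1 := div_le_one_of_le₀ hxc hc.le
  have h := strictConcaveOn_log_Ioi.concaveOn.2 (mem_Ioi.mpr one_pos)
    (mem_Ioi.mpr (by linarith : (0:ℝ) < 1 + c))
    (by linarith : (0:ℝ) ≤ 1 - x / c) (div_nonneg hx hc.le) (by ring)
  simp only [smul_eq_mul, Real.log_one, mul_zero, zero_add, mul_one] at h
  have he : 1 - x / c + x / c * (1 + c) = 1 + x := by
    field_simp
    ring
  rw [he] at h
  exact h
theorem stmt_3 {Ω : Type*} [MeasurableSpace Ω] (μ : Measure Ω) [IsProbabilityMeasure μ]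
    (n : ℕ) (hn : 0 < n) (a : Fin n → ℝ) (ha : ∀ i, 0 < a i)
    (X : Fin n → Ω → ℝ)
    (hmeas : ∀ i, Measurable (X i))
    (hindep : iIndepFun X μ)
    (hdist : ∀ i, μ.map (X i) = expMeasure (a i))
    (μmean astar : ℝ)
    (hμmean : μmean = ∑ i, 1 / a i)
    (hastar : astar = ⨅ i, a i)
    (lam : ℝ) (hlam0 : 0 < lam) (hlam1 : lam ≤ 1) :
    μ {ω | ∑ i, X i ω ≤ lam * μmean} ≤
      ENNReal.ofReal (Real.exp (-(astar * μmean * (lam - 1 - Real.log lam)))) := by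
  haveI : Nonempty (Fin n) := Fin.pos_iff_nonempty.mp hn
  rcases hlam1.eq_or_lt with h1 | hlt
  · subst h1
    simp only [Real.log_one, sub_zero, sub_self, mul_zero, neg_zero, Real.exp_zero,
      ENNReal.ofReal_one]
    exact prob_le_one
  -- lam < 1 case
  obtain ⟨j, hj⟩ := Finite.exists_min a
  have hastar_pos : 0 < astar := hastar ▸ (ha j).trans_le (le_ciInf hj)
  have hastar_le : ∀ i, astar ≤ a i := fun i => hastar ▸ ciInf_le (Finite.bddBelow_range a) i
  set t : ℝ := astar * (lam - 1) / lam with ht_def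
  have ht_neg : t < 0 :=
    div_neg_of_neg_of_pos (mul_neg_of_pos_of_neg hastar_pos (by linarith)) hlam0
  have ht_lt : ∀ i, t < a i := fun i => ht_neg.trans (ha i)
  have h_int : ∀ i, Integrable (fun ω => rexp (t * X i ω)) μ := by
    intro i
    have h1 : Integrable (fun x => rexp (t * x)) (μ.map (X i)) :=
      (hdist i) ▸ my_integrable_exp_expMeasure (ha i) (ht_lt i)
    exact (integrable_map_measure
      (Real.measurable_exp.comp (measurable_id.const_mul t)).aestronglyMeasurable
      (hmeas i).aemeasurable).mp h1
  have h_mgf : ∀ i, mgf (X i) μ t = a i / (a i - t) := by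
    intro i
    have h2 : ∫ x, rexp (t * x) ∂(μ.map (X i)) = a i / (a i - t) := by
      rw [hdist i]; exact my_integral_exp_expMeasure (ha i) (ht_lt i)
    have hg : AEStronglyMeasurable (fun x : ℝ => rexp (t * x)) (μ.map (X i)) :=
      (Measurable.aestronglyMeasurable (by fun_prop))
    rw [← h2]
    exact (integral_map (hmeas i).aemeasurable hg).symm
  have h_int_sum : Integrable (fun ω => rexp (t * (∑ i, X i) ω)) μ :=
    hindep.integrable_exp_mul_sum hmeas (fun i _ => h_int i)
  have hch := measure_le_le_exp_mul_mgf (μ := μ) (X := ∑ i, X i) (lam * μmean)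
    ht_neg.le h_int_sum
  rw [hindep.mgf_sum hmeas Finset.univ] at hch
  simp only [Finset.sum_apply] at hch
  -- per-index mgf bound
  have key_i : ∀ i, a i / (a i - t) ≤ rexp ((astar / a i) * Real.log lam) := by
    intro i
    have hai := ha i
    have hposd : 0 < a i - t := by linarith [ht_lt i]
    have hx : 0 ≤ -t / a i := div_nonneg (by linarith) hai.le
    have hc : 0 < -t / astar := div_pos (by linarith) hastar_pos
    have hxc : -t / a i ≤ -t / astar := by
      gcongr <;> first | exact hastar_le i | linarith
    have hconc := my_log_concave hx hxc hc
    have hratio : (-t / a i) / (-t / astar) = astar / a i := by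
      have hne : t ≠ 0 := ht_neg.ne
      field_simp
    have h1c : 1 + -t / astar = lam⁻¹ := by
      rw [ht_def]
      field_simp
      ring
    rw [hratio, h1c, Real.log_inv] at hconc
    simp only [mul_neg] at hconc
    have hfrac : (0:ℝ) < a i / (a i - t) := div_pos hai hposd
    rw [← Real.exp_log hfrac, Real.exp_le_exp, Real.log_div hai.ne' hposd.ne']
    have hlogsplit : Real.log (a i - t) = Real.log (a i) + Real.log (1 + -t / a i) := by
      rw [← Real.log_mul hai.ne' (by positivity : (1 + -t / a i) ≠ 0)]
      congr 1
      field_simp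
      ring
    linarith [hconc, hlogsplit]
  have hprod : ∏ i, mgf (X i) μ t ≤ rexp (astar * μmean * Real.log lam) := by
    calc ∏ i, mgf (X i) μ t = ∏ i, a i / (a i - t) :=
          Finset.prod_congr rfl fun i _ => h_mgf i
      _ ≤ ∏ i, rexp ((astar / a i) * Real.log lam) :=
          Finset.prod_le_prod (fun i _ => div_nonneg (ha i).le (by linarith [ht_lt i]))
            (fun i _ => key_i i)
      _ = rexp (∑ i, (astar / a i) * Real.log lam) := by rw [← Real.exp_sum]
      _ = rexp (astar * μmean * Real.log lam) := by
          rw [hμmean, Finset.mul_sum, Finset.sum_mul]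
          congr 1
          exact Finset.sum_congr rfl fun i _ => by rw [mul_one_div]
  have hfinal : rexp (-t * (lam * μmean)) * ∏ i, mgf (X i) μ t
      ≤ rexp (-(astar * μmean * (lam - 1 - Real.log lam))) := by
    calc rexp (-t * (lam * μmean)) * ∏ i, mgf (X i) μ t
        ≤ rexp (-t * (lam * μmean)) * rexp (astar * μmean * Real.log lam) := by
          exact mul_le_mul_of_nonneg_left hprod (Real.exp_pos _).le
      _ = rexp (-t * (lam * μmean) + astar * μmean * Real.log lam) := (Real.exp_add _ _).symm
      _ = rexp (-(astar * μmean * (lam - 1 - Real.log lam))) := by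
          congr 1
          rw [ht_def]
          field_simp
          ring
  calc μ {ω | ∑ i, X i ω ≤ lam * μmean}
      = ENNReal.ofReal ((μ {ω | ∑ i, X i ω ≤ lam * μmean}).toReal) :=
        (ENNReal.ofReal_toReal (measure_ne_top μ _)).symm
    _ ≤ ENNReal.ofReal (rexp (-(astar * μmean * (lam - 1 - Real.log lam)))) :=
        ENNReal.ofReal_le_ofReal (hch.trans hfinal)
end

section
/- Let G be a connected graph with |E| ≤ βn(n-1)/2 edges carrying independent Exp(1) weights, and let S_m be the sum of the m lightest edge weights. Then for all φ ≤ (n-1)/n with φn integral and all c ∈ [0, 2φ²/e]: P(S_{φn} ≤ c/β) ≤ exp(φn(2 + ln(c/(2φ²)))). -/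
open MeasureTheory ProbabilityTheory Real Finset

open Set in
lemma expMeasure_integral_exp_neg {θ : ℝ} (hθ : 0 ≤ θ) :
    ∫ x, Real.exp (-θ * x) ∂(expMeasure 1) = (1 + θ)⁻¹ := by
  have h1θ : (0:ℝ) < 1 + θ := by linarith
  have hmeasf : Measurable fun x : ℝ => ENNReal.ofReal (Real.exp (-θ * x)) :=
    (measurable_id.const_mul _).exp.ennreal_ofReal
  have hmeaspdf : Measurable (gammaPDF 1 1) :=
    (measurable_gammaPDFReal 1 1).ennreal_ofReal
  have hint : IntegrableOn (fun x : ℝ => Real.exp (-((1+θ) * x))) (Ici 0) := by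
    rw [integrableOn_Ici_iff_integrableOn_Ioi]
    simpa only [neg_mul] using exp_neg_integrableOn_Ioi 0 h1θ
  have hIci : ∫⁻ x in Ici 0, gammaPDF 1 1 x * ENNReal.ofReal (Real.exp (-θ * x))
      = ENNReal.ofReal ((1 + θ)⁻¹) := by
    have heq : ∀ x ∈ Ici (0:ℝ), gammaPDF 1 1 x * ENNReal.ofReal (Real.exp (-θ * x))
        = ENNReal.ofReal (Real.exp (-((1+θ) * x))) := by
      intro x hx
      rw [gammaPDF_of_nonneg hx,
        ← ENNReal.ofReal_mul (by simp [Real.Gamma_one]; positivity)]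
      congr 1
      simp [Real.Gamma_one, ← Real.exp_add]
      ring_nf
    rw [setLIntegral_congr_fun measurableSet_Ici heq,
      ← ofReal_integral_eq_lintegral_ofReal hint (ae_of_all _ fun x => (Real.exp_pos _).le)]
    congr 1
    rw [integral_Ici_eq_integral_Ioi,
      integral_comp_mul_left_Ioi (fun x => Real.exp (-x)) 0 h1θ]
    simp [integral_exp_neg_Ioi, integral_exp_Iic_zero]
  have hIio : ∫⁻ x in Iio 0, gammaPDF 1 1 x * ENNReal.ofReal (Real.exp (-θ * x)) = 0 := by
    rw [setLIntegral_congr_fun measurableSet_Iio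
      (fun x (hx : x < 0) => by rw [gammaPDF_of_neg hx, zero_mul]), lintegral_zero]
  have hasm : AEStronglyMeasurable (fun x : ℝ => Real.exp (-θ * x)) (expMeasure 1) :=
    Continuous.aestronglyMeasurable (by continuity)
  rw [integral_eq_lintegral_of_nonneg_ae (ae_of_all _ fun x => (Real.exp_pos _).le) hasm]
  rw [show expMeasure 1 = volume.withDensity (gammaPDF 1 1) from rfl,
    lintegral_withDensity_eq_lintegral_mul volume hmeaspdf hmeasf,
    ← lintegral_add_compl _ measurableSet_Ici (μ := volume), compl_Ici]
  simp only [Pi.mul_apply] at hIci hIio ⊢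
  rw [hIci, hIio, add_zero, ENNReal.toReal_ofReal (by positivity)]

open Set in
lemma perset_chernoff{Ω : Type*} [MeasurableSpace Ω]
    (μ : Measure Ω) [IsProbabilityMeasure μ] {E : ℕ}
    (X : Fin E → Ω → ℝ) (hXmeas : ∀ i, Measurable (X i))
    (hXindep : iIndepFun X μ)
    (hXdist : ∀ i, μ.map (X i) = expMeasure 1)
    (s : Finset (Fin E)) {mm : ℕ} (hcard : s.card = mm)
    {t : ℝ} (ht : 0 < t) (htm : t < mm) :
    μ {ω | ∑ i ∈ s, X i ω ≤ t} ≤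
      ENNReal.ofReal (Real.exp ((mm : ℝ) - t) * (t / mm) ^ mm) := by
  set θ : ℝ := (mm : ℝ) / t - 1 with hθdef
  have hθ : 0 ≤ θ := by
    have : (1 : ℝ) < (mm : ℝ) / t := (one_lt_div ht).mpr htm
    simp only [hθdef]; linarith
  have hexpm0 : expMeasure 1 (Iio 0) = 0 := by
    rw [show expMeasure 1 = volume.withDensity (gammaPDF 1 1) from rfl,
      withDensity_apply _ measurableSet_Iio]
    exact lintegral_gammaPDF_of_nonpos le_rfl
  have hX0 : ∀ i, ∀ᵐ ω ∂μ, 0 ≤ X i ω := by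
    intro i
    have hmap : μ.map (X i) (Iio 0) = μ (X i ⁻¹' Iio 0) :=
      Measure.map_apply (hXmeas i) measurableSet_Iio
    rw [hXdist i, hexpm0] at hmap
    rw [ae_iff]
    convert hmap.symm using 2
    ext ω; simp [not_le]
  have hInt : ∀ i, Integrable (fun ω => Real.exp (-θ * X i ω)) μ := by
    intro i
    refine Integrable.mono' (integrable_const 1)
      (((hXmeas i).const_mul (-θ)).exp.aestronglyMeasurable) ?_
    filter_upwards [hX0 i] with ω hω
    rw [Real.norm_eq_abs, Real.abs_exp, Real.exp_le_one_iff]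
    have : 0 ≤ θ * X i ω := mul_nonneg hθ hω
    linarith
  have hsum_int : Integrable (fun ω => Real.exp (-θ * (∑ i ∈ s, X i) ω)) μ :=
    hXindep.integrable_exp_mul_sum hXmeas (fun i _ => hInt i)
  have hcher := measure_le_le_exp_mul_mgf (X := ∑ i ∈ s, X i) (μ := μ) (t := -θ) t
    (by linarith) hsum_int
  have hmgf_i : ∀ i, mgf (X i) μ (-θ) = t / mm := by
    intro i
    have hasm : AEStronglyMeasurable (fun x : ℝ => Real.exp (-θ * x)) (μ.map (X i)) :=
      Continuous.aestronglyMeasurable (by continuity)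
    have : mgf (X i) μ (-θ) = ∫ x, Real.exp (-θ * x) ∂(μ.map (X i)) :=
      (integral_map (hXmeas i).aemeasurable hasm).symm
    rw [this, hXdist i, expMeasure_integral_exp_neg hθ, hθdef]
    rw [show (1 : ℝ) + ((mm : ℝ) / t - 1) = (mm : ℝ) / t by ring, inv_div]
  have hmgf : mgf (∑ i ∈ s, X i) μ (-θ) = (t / mm) ^ mm := by
    rw [hXindep.mgf_sum hXmeas s, Finset.prod_congr rfl fun i _ => hmgf_i i,
      Finset.prod_const, hcard]
  have hexp : -(-θ) * t = (mm : ℝ) - t := by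
    rw [neg_neg, hθdef, sub_mul, div_mul_cancel₀ _ ht.ne', one_mul]
  rw [hmgf, hexp] at hcher
  have hset : {ω | (∑ i ∈ s, X i) ω ≤ t} = {ω | ∑ i ∈ s, X i ω ≤ t} := by
    ext ω; simp [Finset.sum_apply]
  rw [hset] at hcher
  calc μ {ω | ∑ i ∈ s, X i ω ≤ t}
      = ENNReal.ofReal (μ {ω | ∑ i ∈ s, X i ω ≤ t}).toReal :=
        (ENNReal.ofReal_toReal (measure_ne_top μ _)).symm
    _ ≤ _ := ENNReal.ofReal_le_ofReal hcher

set_option maxHeartbeats 2000000 in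
theorem stmt_14 {Ω : Type*} [MeasurableSpace Ω]
    (μ : Measure Ω) [IsProbabilityMeasure μ]
    (n E : ℕ) (hn : 2 ≤ n) (β : ℝ) (hβ : 0 < β)
    (hE : (E : ℝ) ≤ β * n * (n - 1) / 2)
    -- the edge weights: E i.i.d. Exp(1) random variables
    (X : Fin E → Ω → ℝ) (hXmeas : ∀ i, Measurable (X i))
    (hXindep : iIndepFun X μ)
    (hXdist : ∀ i, μ.map (X i) = expMeasure 1)
    -- S m = sum of the m lightest weights
    (S : ℕ → Ω → ℝ)
    (hS : ∀ m ω, S m ω = ⨅ s : {s : Finset (Fin E) // s.card = m}, ∑ i ∈ s.1, X i ω)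
    -- m = φ·n with φ ≤ (n-1)/n
    (m : ℕ) (hm1 : 1 ≤ m) (hmn : m ≤ n - 1) (hmE : m ≤ E)
    (φ : ℝ) (hφ : φ = (m : ℝ) / n)
    (c : ℝ) (hc0 : 0 ≤ c) (hc1 : c ≤ 2 * φ ^ 2 / Real.exp 1) :
    μ {ω | S m ω ≤ c / β} ≤
      ENNReal.ofReal (Real.exp (φ * n * (2 + Real.log (c / (2 * φ ^ 2))))) := by
  have hn0 : (0:ℝ) < n := by positivity
  have hn2 : (2:ℝ) ≤ n := by exact_mod_cast hn
  have hm0 : (0:ℝ) < m := by exact_mod_cast hm1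
  have hφn : φ * (n : ℝ) = m := by rw [hφ]; field_simp
  rcases eq_or_lt_of_le hc0 with hc | hc
  · -- trivial case c = 0
    calc μ {ω | S m ω ≤ c / β} ≤ 1 := prob_le_one
      _ ≤ ENNReal.ofReal (Real.exp (φ * n * (2 + Real.log (c / (2 * φ ^ 2))))) := by
          rw [← hc, show (0:ℝ)/(2*φ^2) = 0 by simp, Real.log_zero, add_zero,
            ← ENNReal.ofReal_one]
          apply ENNReal.ofReal_le_ofReal
          rw [← Real.exp_zero]
          apply Real.exp_le_exp.mpr
          have h1 : 0 ≤ φ * n := by rw [hφn]; positivity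
          nlinarith
  · have ht : 0 < c / β := div_pos hc hβ
    have hφpos : 0 < φ := by rw [hφ]; positivity
    have hmcast : (m:ℝ) ≤ β * n * (n-1)/2 := le_trans (by exact_mod_cast Nat.cast_le.mpr hmE) hE
    have h2φ : 2 * φ^2 ≤ β * m := by
      have key : 2*(m:ℝ)^2 ≤ β * m * (n:ℝ)^2 := by
        nlinarith [mul_le_mul_of_nonneg_right hmcast hm0.le,
          mul_nonneg (mul_nonneg hβ.le hm0.le) hn0.le]
      calc 2 * φ^2 = 2*(m:ℝ)^2 / (n:ℝ)^2 := by rw [hφ, div_pow]; ring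
        _ ≤ β * m := by rw [div_le_iff₀ (by positivity)]; linarith
    have htm : c / β ≤ (m:ℝ) / Real.exp 1 := by
      have h1 : c / β ≤ (2 * φ^2 / Real.exp 1) / β := by gcongr
      have h2 : (2 * φ^2 / Real.exp 1) / β ≤ (m:ℝ) / Real.exp 1 := by
        rw [div_div, div_le_div_iff₀ (by positivity) (Real.exp_pos 1)]
        calc 2 * φ^2 * Real.exp 1 ≤ β * m * Real.exp 1 := by gcongr
          _ = (m:ℝ) * (Real.exp 1 * β) := by ring
      linarith
    have htm' : c / β < (m:ℝ) := lt_of_le_of_lt htm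
      (div_lt_self hm0 (by nlinarith [Real.exp_one_gt_d9]))
    haveI : Nonempty {s : Finset (Fin E) // s.card = m} := by
      obtain ⟨s, -, hs⟩ := Finset.exists_subset_card_eq
        (show m ≤ (Finset.univ : Finset (Fin E)).card by simpa using hmE)
      exact ⟨⟨s, hs⟩⟩
    have hsub : {ω | S m ω ≤ c / β} ⊆
        ⋃ s : {s : Finset (Fin E) // s.card = m}, {ω | ∑ i ∈ s.1, X i ω ≤ c / β} := by
      intro ω hω
      simp only [Set.mem_setOf_eq, hS] at hω
      obtain ⟨s, hs⟩ := exists_eq_ciInf_of_finite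
        (f := fun s : {s : Finset (Fin E) // s.card = m} => ∑ i ∈ s.1, X i ω)
      exact Set.mem_iUnion.2 ⟨s, by rw [Set.mem_setOf_eq, hs]; exact hω⟩
    have hreal : (E.choose m : ℝ) * (Real.exp ((m:ℝ) - c / β) * (c / β / m) ^ m)
        ≤ Real.exp (φ * n * (2 + Real.log (c / (2 * φ ^ 2)))) := by
      have hy0 : (0:ℝ) < c / (2*φ^2) := by positivity
      have hRHS : Real.exp (φ * n * (2 + Real.log (c / (2 * φ ^ 2))))
          = Real.exp (2*(m:ℝ)) * (c / (2*φ^2))^m := by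
        rw [hφn, show (m:ℝ) * (2 + Real.log (c / (2 * φ ^ 2)))
            = 2*(m:ℝ) + (m:ℝ) * Real.log (c / (2 * φ ^ 2)) by ring, Real.exp_add,
          Real.exp_nat_mul, Real.exp_log hy0]
      have hfac : ((m:ℝ))^m / m.factorial ≤ Real.exp m := by
        have h := Real.sum_le_exp_of_nonneg (x := (m:ℝ)) (by positivity) (m+1)
        have h2 : ((m:ℝ))^m / m.factorial ≤ ∑ i ∈ Finset.range (m+1), (m:ℝ)^i / i.factorial :=
          Finset.single_le_sum (f := fun i => (m:ℝ)^i / (i.factorial : ℝ))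
            (fun i _ => by positivity) (Finset.self_mem_range_succ m)
        linarith
      have hchoose : (E.choose m : ℝ) ≤ (E:ℝ)^m / m.factorial := Nat.choose_le_pow_div m E
      have hfacpos : (0:ℝ) < m.factorial := by exact_mod_cast Nat.factorial_pos m
      have hfacinv : 1 / (m.factorial : ℝ) ≤ Real.exp m / (m:ℝ)^m := by
        rw [div_le_div_iff₀ hfacpos (by positivity), one_mul]
        rw [div_le_iff₀ hfacpos] at hfac
        linarith
      have hEt : (E:ℝ) * (c / β) ≤ c * n * n / 2 := by
        have h1 : (E:ℝ) * (c / β) ≤ (β * n * (n-1)/2) * (c / β) := by gcongr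
        have h2 : (β * n * (n-1)/2) * (c / β) = c * n * (n-1) / 2 := by
          field_simp
        nlinarith
      have hφ2 : φ^2 * (n:ℝ)^2 = (m:ℝ)^2 := by rw [hφ]; field_simp
      have hEtm : (E:ℝ) * (c / β) / (m:ℝ)^2 ≤ c / (2*φ^2) := by
        rw [div_le_div_iff₀ (by positivity) (by positivity)]
        calc (E:ℝ) * (c / β) * (2*φ^2) ≤ (c * n * n / 2) * (2*φ^2) := by gcongr
          _ = c * (m:ℝ)^2 := by rw [← hφ2]; ring
      have hsplit : ((E:ℝ) * (c / β) / (m:ℝ))^m = (E:ℝ)^m * (c / β / (m:ℝ))^m := by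
        rw [← mul_pow, mul_div_assoc]
      have hpowdiv : ((E:ℝ) * (c / β) / (m:ℝ))^m / (m:ℝ)^m
          = ((E:ℝ) * (c / β) / (m:ℝ)^2)^m := by
        rw [← div_pow, div_div, ← sq]
      calc (E.choose m : ℝ) * (Real.exp ((m:ℝ) - c / β) * (c / β / m) ^ m)
          ≤ ((E:ℝ)^m / m.factorial) * (Real.exp (m:ℝ) * (c / β / m) ^ m) :=
            mul_le_mul hchoose
              (mul_le_mul_of_nonneg_right (Real.exp_le_exp.mpr (by linarith)) (by positivity))
              (by positivity) (by positivity)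
        _ = ((E:ℝ) * (c / β) / (m:ℝ))^m * (1 / (m.factorial:ℝ)) * Real.exp (m:ℝ) := by
            rw [hsplit]; ring
        _ ≤ ((E:ℝ) * (c / β) / (m:ℝ))^m * (Real.exp (m:ℝ) / (m:ℝ)^m) * Real.exp (m:ℝ) := by
            gcongr
        _ = Real.exp (2*(m:ℝ)) * ((E:ℝ) * (c / β) / (m:ℝ)^2)^m := by
            rw [← hpowdiv, show (2:ℝ)*(m:ℝ) = (m:ℝ) + (m:ℝ) by ring, Real.exp_add]
            ring
        _ ≤ Real.exp (2*(m:ℝ)) * (c / (2*φ^2))^m := by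
            gcongr
        _ = _ := hRHS.symm
    calc μ {ω | S m ω ≤ c / β}
        ≤ μ (⋃ s : {s : Finset (Fin E) // s.card = m}, {ω | ∑ i ∈ s.1, X i ω ≤ c / β}) :=
          measure_mono hsub
      _ ≤ ∑' s : {s : Finset (Fin E) // s.card = m}, μ {ω | ∑ i ∈ s.1, X i ω ≤ c / β} :=
          measure_iUnion_le _
      _ = ∑ s : {s : Finset (Fin E) // s.card = m}, μ {ω | ∑ i ∈ s.1, X i ω ≤ c / β} :=
          tsum_fintype _
      _ ≤ ∑ _s : {s : Finset (Fin E) // s.card = m},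
            ENNReal.ofReal (Real.exp ((m:ℝ) - c / β) * (c / β / m) ^ m) :=
          Finset.sum_le_sum fun s _ =>
            perset_chernoff μ X hXmeas hXindep hXdist s.1 s.2 ht htm'
      _ = (E.choose m : ℕ) * ENNReal.ofReal (Real.exp ((m:ℝ) - c / β) * (c / β / m) ^ m) := by
          rw [Finset.sum_const, Finset.card_univ, Fintype.card_finset_len, Fintype.card_fin,
            nsmul_eq_mul]
      _ = ENNReal.ofReal ((E.choose m : ℝ) * (Real.exp ((m:ℝ) - c / β) * (c / β / m) ^ m)) := by
          rw [← ENNReal.ofReal_natCast (E.choose m), ← ENNReal.ofReal_mul (by positivity)]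
      _ ≤ _ := ENNReal.ofReal_le_ofReal hreal
end
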